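/- Let A : [a,b] → M₂(ℂ) be continuous with A(t) Hermitian and A(t) having distinct eigenvalues for every t ∈ [a,b]. Then there exists a continuous U : [a,b] → M₂(ℂ) such that U(t) is unitary and U(t)* A(t) U(t) is diagonal for all t ∈ [a,b]. -/

import Mathlib

open Matrix Set Complex

def HasDistinctEigenvalues (A : Matrix (Fin 2) (Fin 2) ℂ) : Prop :=
  ∃ mu1 mu2 : ℝ, mu1 ≠ mu2 ∧
    ∀ x : ℂ, det (x • (1 : Matrix (Fin 2) (Fin 2) ℂ) - A) = 0 ↔
      x = (mu1 : ℂ) ∨ x = (mu2 : ℂ)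

lemma glue_icc {E : Type*} [TopologicalSpace E] {a c b : ℝ} (hac : a ≤ c) (hcb : c ≤ b)
    {f g : ℝ → E} (hf : ContinuousOn f (Icc a c)) (hg : ContinuousOn g (Icc c b))
    (hfg : f c = g c) :
    ContinuousOn (fun s => if s ≤ c then f s else g s) (Icc a b) := by
  set F : ℝ → E := fun s => if s ≤ c then f s else g s with hF
  have hF1 : ContinuousOn F (Icc a c) := hf.congr (fun x hx => by simp [hF, hx.2])
  have hF2 : ContinuousOn F (Icc c b) := hg.congr (fun x hx => by
    by_cases h : x ≤ c
    · have : x = c := le_antisymm h hx.1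
      simp [hF, this, hfg]
    · simp [hF, h])
  have hsub : Icc a b ⊆ Icc a c ∪ Icc c b := by
    intro x hx
    rcases le_total x c with h | h
    · exact Or.inl ⟨hx.1, h⟩
    · exact Or.inr ⟨h, hx.2⟩
  apply ContinuousOn.mono _ hsub
  intro x hx
  have key : ∀ s t : Set ℝ, IsClosed t → x ∈ s →
      ContinuousOn F s → ContinuousOn F t → ContinuousWithinAt F (s ∪ t) x := by
    intro s t ht hxs hs htc
    apply ContinuousWithinAt.union (hs x hxs)
    by_cases hxt : x ∈ t
    · exact htc x hxt
    · exact continuousWithinAt_of_notMem_closure (by rwa [ht.closure_eq])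
  rcases hx with hx | hx
  · exact key _ _ isClosed_Icc hx hF1 hF2
  · rw [union_comm]
    exact key _ _ isClosed_Icc hx hF2 hF1

lemma mulVec_norm_le (Δ : Matrix (Fin 2) (Fin 2) ℂ) (x : Fin 2 → ℂ) {ε : ℝ} (hε : 0 ≤ ε)
    (h : ∀ i j, ‖Δ i j‖ ≤ ε) : ‖Δ *ᵥ x‖ ≤ 2 * ε * ‖x‖ := by
  have hx : ∀ j, ‖x j‖ ≤ ‖x‖ := fun j => norm_le_pi_norm x j
  apply pi_norm_le_iff_of_nonneg (by positivity) |>.mpr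
  intro i
  have : (Δ *ᵥ x) i = Δ i 0 * x 0 + Δ i 1 * x 1 := by
    simp [Matrix.mulVec, dotProduct, Fin.sum_univ_two]
  rw [this]
  calc ‖Δ i 0 * x 0 + Δ i 1 * x 1‖ ≤ ‖Δ i 0 * x 0‖ + ‖Δ i 1 * x 1‖ := norm_add_le _ _
    _ = ‖Δ i 0‖ * ‖x 0‖ + ‖Δ i 1‖ * ‖x 1‖ := by rw [norm_mul, norm_mul]
    _ ≤ ε * ‖x‖ + ε * ‖x‖ := by
        gcongr
        · exact h i 0
        · exact hx 0
        · exact h i 1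
        · exact hx 1
    _ = 2 * ε * ‖x‖ := by ring

lemma exists_section (a b : ℝ) (hab : a ≤ b) (P : ℝ → Matrix (Fin 2) (Fin 2) ℂ)
    (hentry : ∀ i j, ContinuousOn (fun t => P t i j) (Icc a b))
    (hproj : ∀ t ∈ Icc a b, P t * P t = P t)
    (hPne : ∀ t ∈ Icc a b, P t ≠ 0) :
    ∃ v : ℝ → (Fin 2 → ℂ), ContinuousOn v (Icc a b) ∧
      ∀ t ∈ Icc a b, v t ≠ 0 ∧ P t *ᵥ v t = v t := by
  -- continuity of t ↦ P t *ᵥ w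
  have hmvcont : ∀ w : Fin 2 → ℂ, ContinuousOn (fun t => P t *ᵥ w) (Icc a b) := by
    intro w
    apply continuousOn_pi.mpr
    intro i
    have : (fun t => (P t *ᵥ w) i) = fun t => P t i 0 * w 0 + P t i 1 * w 1 := by
      funext t; simp [Matrix.mulVec, dotProduct, Fin.sum_univ_two]
    rw [this]
    exact ((hentry i 0).mul continuousOn_const).add ((hentry i 1).mul continuousOn_const)
  -- uniform continuity
  have hQ : ContinuousOn (fun t => fun p : Fin 2 × Fin 2 => P t p.1 p.2) (Icc a b) :=
    continuousOn_pi.mpr fun p => hentry p.1 p.2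
  have hUC := isCompact_Icc.uniformContinuousOn_of_continuous hQ
  obtain ⟨δ, hδpos, hδ⟩ := Metric.uniformContinuousOn_iff.mp hUC (1/8) (by norm_num)
  -- key estimate
  have hest : ∀ s ∈ Icc a b, ∀ t ∈ Icc a b, dist s t < δ → ∀ x : Fin 2 → ℂ,
      ‖P s *ᵥ x - P t *ᵥ x‖ ≤ ‖x‖ / 4 := by
    intro s hs t ht hst x
    have h1 := hδ s hs t ht hst
    have h2 : ∀ i j, ‖(P s - P t) i j‖ ≤ 1/8 := by
      intro i j
      have := dist_le_pi_dist (fun p : Fin 2 × Fin 2 => P s p.1 p.2)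
        (fun p : Fin 2 × Fin 2 => P t p.1 p.2) (i, j)
      rw [Matrix.sub_apply, ← dist_eq_norm]
      exact le_trans this (le_of_lt h1)
    have := mulVec_norm_le (P s - P t) x (by norm_num) h2
    rw [Matrix.sub_mulVec] at this
    linarith [this]
  -- grid
  set n : ℕ := ⌈(b - a)/δ⌉₊ + 1 with hn
  have hnpos : (0:ℝ) < n := by positivity
  set h : ℝ := (b - a)/n with hh
  have hh0 : 0 ≤ h := by
    apply div_nonneg (by linarith) (le_of_lt hnpos)
  have hhδ : h < δ := by
    rw [hh, div_lt_iff₀ hnpos]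
    have h1 : (b - a)/δ < n := by
      calc (b-a)/δ ≤ (⌈(b - a)/δ⌉₊ : ℝ) := Nat.le_ceil _
        _ < n := by rw [hn]; push_cast; linarith
    calc b - a = ((b-a)/δ) * δ := by field_simp
      _ < n * δ := by
          apply mul_lt_mul_of_pos_right h1 hδpos
      _ = δ * n := by ring
  set T : ℕ → ℝ := fun i => a + i * h with hT
  have hT0 : T 0 = a := by simp [hT]
  have hTn : T n = b := by
    rw [hT, hh]; field_simp; ring
  have hTmono : ∀ i : ℕ, T i ≤ T (i+1) := by
    intro i
    show a + (i:ℝ) * h ≤ a + ((i:ℕ)+1 : ℕ) * h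
    push_cast
    nlinarith
  have hTmem : ∀ i : ℕ, i ≤ n → T i ∈ Icc a b := by
    intro i hi
    constructor
    · show a ≤ a + (i:ℝ) * h
      have : (0:ℝ) ≤ (i:ℝ) * h := mul_nonneg (Nat.cast_nonneg i) hh0
      linarith
    · show a + (i:ℝ) * h ≤ b
      have : (i:ℝ) * h ≤ n * h := by
        apply mul_le_mul_of_nonneg_right _ hh0
        exact_mod_cast hi
      have hTn' : a + n * h = b := by rw [hh]; field_simp; ring
      linarith
  have hTgap : ∀ i : ℕ, T (i+1) - T i = h := by
    intro i
    show (a + ((i:ℕ)+1 : ℕ) * h) - (a + (i:ℝ) * h) = h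
    push_cast
    ring
  -- initial vector
  have hainicc : a ∈ Icc a b := ⟨le_refl a, hab⟩
  obtain ⟨w0, hw0norm, hw0fix⟩ : ∃ w0 : Fin 2 → ℂ, ‖w0‖ = 1 ∧ P a *ᵥ w0 = w0 := by
    have hPa := hPne a hainicc
    have : ∃ i j, P a i j ≠ 0 := by
      by_contra hcon
      push_neg at hcon
      exact hPa (by ext i j; exact hcon i j)
    obtain ⟨i, j, hij⟩ := this
    set col : Fin 2 → ℂ := fun k => P a k j with hcol
    have hcolne : col ≠ 0 := fun hc => hij (congrFun hc i)
    have hcolfix : P a *ᵥ col = col := by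
      ext k
      have : (P a *ᵥ col) k = (P a * P a) k j := by
        simp [Matrix.mulVec, dotProduct, Matrix.mul_apply, hcol]
      rw [this, hproj a hainicc]
    have hcn : ‖col‖ ≠ 0 := norm_ne_zero_iff.mpr hcolne
    refine ⟨‖col‖⁻¹ • col, ?_, ?_⟩
    · rw [norm_smul, norm_inv, norm_norm, inv_mul_cancel₀ hcn]
    · rw [Matrix.mulVec_smul, hcolfix]
  -- main induction
  have main : ∀ i : ℕ, i ≤ n → ∃ f : ℝ → (Fin 2 → ℂ),
      ContinuousOn f (Icc a (T i)) ∧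
      (∀ s ∈ Icc a (T i), f s ≠ 0 ∧ P s *ᵥ f s = f s) ∧
      ‖f (T i)‖ = 1 := by
    intro i
    induction i with
    | zero =>
      intro _
      refine ⟨fun _ => w0, continuousOn_const, ?_, by rw [hT0]; exact hw0norm⟩
      intro s hs
      rw [hT0] at hs
      have : s = a := le_antisymm hs.2 hs.1
      subst this
      have : w0 ≠ 0 := by
        intro hc
        rw [hc] at hw0norm
        simp at hw0norm
      exact ⟨this, hw0fix⟩
    | succ i ih =>
      intro hi1
      obtain ⟨f, hfc, hfprop, hfnorm⟩ := ih (Nat.le_of_succ_le hi1)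
      have haTi : a ≤ T i := by
        have := (hTmem i (Nat.le_of_succ_le hi1)).1
        exact this
      set w : Fin 2 → ℂ := f (T i) with hw
      have hwfix : P (T i) *ᵥ w = w := (hfprop (T i) ⟨haTi, le_refl _⟩).2
      -- key estimate on the new interval
      have hkey : ∀ s ∈ Icc (T i) (T (i+1)), 3/4 ≤ ‖P s *ᵥ w‖ := by
        intro s hs
        have hsmem : s ∈ Icc a b := by
          constructor
          · exact le_trans haTi hs.1
          · exact le_trans hs.2 (hTmem (i+1) hi1).2
        have hdist : dist s (T i) < δ := by
          rw [Real.dist_eq, _root_.abs_of_nonneg (by linarith [hs.1])]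
          have := hs.2
          have hgap := hTgap i
          linarith [hhδ]
        have hest' := hest s hsmem (T i) (hTmem i (Nat.le_of_succ_le hi1)) hdist w
        rw [hwfix] at hest'
        have h1 : ‖w‖ = 1 := hfnorm
        rw [h1] at hest'
        have : ‖w‖ - ‖P s *ᵥ w - w‖ ≤ ‖P s *ᵥ w‖ := by
          have := norm_sub_norm_le (P s *ᵥ w) w
          have h2 := abs_norm_sub_norm_le (P s *ᵥ w) w
          rw [abs_sub_le_iff] at h2
          linarith [h2.2]
        rw [h1] at this
        linarith
      have hne34 : ∀ s ∈ Icc (T i) (T (i+1)), ‖P s *ᵥ w‖ ≠ 0 := by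
        intro s hs
        have := hkey s hs
        positivity
      have hvne : ∀ s ∈ Icc (T i) (T (i+1)), P s *ᵥ w ≠ 0 := by
        intro s hs
        exact norm_ne_zero_iff.mp (hne34 s hs)
      set g : ℝ → (Fin 2 → ℂ) := fun s => ‖P s *ᵥ w‖⁻¹ • (P s *ᵥ w) with hg
      have hgc : ContinuousOn g (Icc (T i) (T (i+1))) := by
        have hsub : Icc (T i) (T (i+1)) ⊆ Icc a b := by
          intro x hx
          exact ⟨le_trans haTi hx.1, le_trans hx.2 (hTmem (i+1) hi1).2⟩
        have hmv : ContinuousOn (fun s => P s *ᵥ w) (Icc (T i) (T (i+1))) :=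
          (hmvcont w).mono hsub
        exact ContinuousOn.smul (hmv.norm.inv₀ hne34) hmv
      have hgTi : g (T i) = w := by
        rw [hg]
        simp only [hwfix, hfnorm]
        norm_num
      set F : ℝ → (Fin 2 → ℂ) := fun s => if s ≤ T i then f s else g s with hF
      refine ⟨F, ?_, ?_, ?_⟩
      · exact glue_icc haTi (hTmono i) hfc hgc (hgTi ▸ rfl)
      · intro s hs
        by_cases hsle : s ≤ T i
        · have : F s = f s := by simp [hF, hsle]
          rw [this]
          exact hfprop s ⟨hs.1, hsle⟩
        · have hFg : F s = g s := by simp [hF, hsle]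
          push_neg at hsle
          have hsmem : s ∈ Icc (T i) (T (i+1)) := ⟨le_of_lt hsle, hs.2⟩
          constructor
          · rw [hFg, hg]
            exact smul_ne_zero (inv_ne_zero (hne34 s hsmem)) (hvne s hsmem)
          · rw [hFg, hg]
            simp only [Matrix.mulVec_smul]
            rw [Matrix.mulVec_mulVec, hproj s (⟨le_trans haTi hsmem.1,
              le_trans hsmem.2 (hTmem (i+1) hi1).2⟩ : s ∈ Icc a b)]
      · by_cases hle : T (i+1) ≤ T i
        · have hEq : T (i+1) = T i := le_antisymm hle (hTmono i)
          have : F (T (i+1)) = f (T i) := by simp [hF, hEq]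
          rw [this]
          exact hfnorm
        · have : F (T (i+1)) = g (T (i+1)) := by simp [hF, hle]
          rw [this, hg]
          simp only [norm_smul, norm_inv, norm_norm]
          exact inv_mul_cancel₀ (hne34 (T (i+1)) ⟨hTmono i, le_refl _⟩)
  obtain ⟨f, hfc, hfprop, _⟩ := main n (le_refl n)
  rw [hTn] at hfc hfprop
  exact ⟨f, hfc, hfprop⟩

lemma unitary_of_eigen (M : Matrix (Fin 2) (Fin 2) ℂ) (hM : Mᴴ = M)
    (v0 v1 : ℂ) (μ : ℝ)
    (h0 : M 0 0 * v0 + M 0 1 * v1 = (μ : ℂ) * v0)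
    (h1 : M 1 0 * v0 + M 1 1 * v1 = (μ : ℂ) * v1)
    (hn : (starRingEnd ℂ) v0 * v0 + (starRingEnd ℂ) v1 * v1 = 1) :
    (!![v0, -(starRingEnd ℂ) v1; v1, (starRingEnd ℂ) v0])ᴴ * !![v0, -(starRingEnd ℂ) v1; v1, (starRingEnd ℂ) v0] = 1 ∧
    ((!![v0, -(starRingEnd ℂ) v1; v1, (starRingEnd ℂ) v0])ᴴ * M * !![v0, -(starRingEnd ℂ) v1; v1, (starRingEnd ℂ) v0]).IsDiag := by
  have e00 : (starRingEnd ℂ) (M 0 0) = M 0 0 := by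
    nth_rewrite 2 [← hM]; simp [Matrix.conjTranspose_apply]
  have e11 : (starRingEnd ℂ) (M 1 1) = M 1 1 := by
    nth_rewrite 2 [← hM]; simp [Matrix.conjTranspose_apply]
  have e01 : M 0 1 = (starRingEnd ℂ) (M 1 0) := by
    nth_rewrite 1 [← hM]; simp [Matrix.conjTranspose_apply]
  have h0' : M 0 0 * (starRingEnd ℂ) v0 + M 1 0 * (starRingEnd ℂ) v1
      = (μ : ℂ) * (starRingEnd ℂ) v0 := by
    have := congrArg (starRingEnd ℂ) h0
    simpa [Complex.conj_ofReal, e00, e01] using this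
  have h1' : (starRingEnd ℂ) (M 1 0) * (starRingEnd ℂ) v0 + M 1 1 * (starRingEnd ℂ) v1
      = (μ : ℂ) * (starRingEnd ℂ) v1 := by
    have := congrArg (starRingEnd ℂ) h1
    simpa [Complex.conj_ofReal, e11] using this
  constructor
  · ext i j
    fin_cases i <;> fin_cases j <;>
      simp [Matrix.mul_apply, Fin.sum_univ_two, Matrix.conjTranspose_apply, Matrix.one_apply] <;>
      ring_nf <;>
      linear_combination hn
  · intro i j hij
    fin_cases i <;> fin_cases j <;> simp_all (config := {failIfUnchanged := false}) <;>
      simp [Matrix.mul_apply, Fin.sum_univ_two, Matrix.conjTranspose_apply]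
    · rw [e01]
      linear_combination (-(starRingEnd ℂ) v1) * h0' + ((starRingEnd ℂ) v0) * h1'
    · rw [e01]
      linear_combination (-v1) * h0 + v0 * h1

lemma herm_entries (M : Matrix (Fin 2) (Fin 2) ℂ) (hM : Mᴴ = M) :
    M 0 0 = ((M 0 0).re : ℂ) ∧ M 1 1 = ((M 1 1).re : ℂ) ∧ M 0 1 = (starRingEnd ℂ) (M 1 0) := by
  have e00 : (starRingEnd ℂ) (M 0 0) = M 0 0 := by
    nth_rewrite 2 [← hM]; simp [Matrix.conjTranspose_apply]
  have e11 : (starRingEnd ℂ) (M 1 1) = M 1 1 := by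
    nth_rewrite 2 [← hM]; simp [Matrix.conjTranspose_apply]
  have e01 : M 0 1 = (starRingEnd ℂ) (M 1 0) := by
    nth_rewrite 1 [← hM]; simp [Matrix.conjTranspose_apply]
  exact ⟨(Complex.conj_eq_iff_re.mp e00).symm, (Complex.conj_eq_iff_re.mp e11).symm, e01⟩

lemma det_char (M : Matrix (Fin 2) (Fin 2) ℂ) (hM : Mᴴ = M) (x : ℂ) :
    det (x • (1 : Matrix (Fin 2) (Fin 2) ℂ) - M)
      = (x - ((M 0 0).re : ℂ)) * (x - ((M 1 1).re : ℂ)) - (Complex.normSq (M 1 0) : ℂ) := by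
  obtain ⟨er, es, eb⟩ := herm_entries M hM
  rw [Matrix.det_fin_two]
  have hb : ((starRingEnd ℂ) (M 1 0)) * (M 1 0) = ((Complex.normSq (M 1 0) :ℝ):ℂ) := by
    rw [mul_comm, Complex.mul_conj]
  simp only [Matrix.sub_apply, Matrix.smul_apply, Matrix.one_apply, smul_eq_mul]
  rw [eb, er, es]
  norm_num
  linear_combination hb

-- Vieta: sum / product / discriminant
lemma vieta (M : Matrix (Fin 2) (Fin 2) ℂ) (hM : Mᴴ = M) {mu1 mu2 : ℝ} (hne : mu1 ≠ mu2)
    (hiff : ∀ x : ℂ, det (x • (1 : Matrix (Fin 2) (Fin 2) ℂ) - M) = 0 ↔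
      x = (mu1 : ℂ) ∨ x = (mu2 : ℂ)) :
    (M 0 0).re + (M 1 1).re = mu1 + mu2 ∧
    (M 0 0).re * (M 1 1).re - Complex.normSq (M 1 0) = mu1 * mu2 := by
  set r := (M 0 0).re
  set s := (M 1 1).re
  set nb := Complex.normSq (M 1 0)
  have q1 : ((mu1:ℂ) - r) * ((mu1:ℂ) - s) - (nb : ℂ) = 0 := by
    rw [← det_char M hM]; exact (hiff mu1).mpr (Or.inl rfl)
  have q2 : ((mu2:ℂ) - r) * ((mu2:ℂ) - s) - (nb : ℂ) = 0 := by
    rw [← det_char M hM]; exact (hiff mu2).mpr (Or.inr rfl)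
  have hneC : (mu1 : ℂ) - mu2 ≠ 0 := sub_ne_zero.mpr (by exact_mod_cast hne)
  have h3 : ((mu1:ℂ) - mu2) * (((r:ℂ) + s) - (mu1 + mu2)) = 0 := by
    linear_combination q2 - q1
  have hsum : (r:ℂ) + s = (mu1:ℂ) + mu2 := by
    rcases mul_eq_zero.mp h3 with h | h
    · exact absurd h hneC
    · linear_combination h
  have hprod : (r:ℂ) * s - nb = (mu1:ℂ) * mu2 := by
    linear_combination q1 + (mu1:ℂ) * hsum
  constructor
  · exact_mod_cast hsum
  · exact_mod_cast hprod

lemma disc_pos (M : Matrix (Fin 2) (Fin 2) ℂ) (hM : Mᴴ = M)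
    (hdist : HasDistinctEigenvalues M) :
    0 < ((M 0 0).re - (M 1 1).re)^2 + 4 * Complex.normSq (M 1 0) := by
  obtain ⟨mu1, mu2, hne, hiff⟩ := hdist
  obtain ⟨hsum, hprod⟩ := vieta M hM hne hiff
  have h1 : ((M 0 0).re - (M 1 1).re)^2 + 4 * Complex.normSq (M 1 0) = (mu1 - mu2)^2 := by
    linear_combination ((M 0 0).re + (M 1 1).re + mu1 + mu2) * hsum - 4 * hprod
  rw [h1]
  have := sub_ne_zero.mpr hne
  positivity

lemma cayley_hamilton_2x2 (M : Matrix (Fin 2) (Fin 2) ℂ) (hM : Mᴴ = M) :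
    M * M = (((M 0 0).re + (M 1 1).re : ℝ) : ℂ) • M
      - (((M 0 0).re * (M 1 1).re - Complex.normSq (M 1 0) : ℝ) : ℂ) • (1 : Matrix (Fin 2) (Fin 2) ℂ) := by
  have e00 : (starRingEnd ℂ) (M 0 0) = M 0 0 := by
    nth_rewrite 2 [← hM]; simp [Matrix.conjTranspose_apply]
  have e11 : (starRingEnd ℂ) (M 1 1) = M 1 1 := by
    nth_rewrite 2 [← hM]; simp [Matrix.conjTranspose_apply]
  have eb : M 0 1 = (starRingEnd ℂ) (M 1 0) := by
    nth_rewrite 1 [← hM]; simp [Matrix.conjTranspose_apply]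
  set r : ℝ := (M 0 0).re with hr
  set s : ℝ := (M 1 1).re with hs
  set nb : ℝ := Complex.normSq (M 1 0) with hnb
  have er : M 0 0 = (r:ℂ) := (Complex.conj_eq_iff_re.mp e00).symm
  have es : M 1 1 = (s:ℂ) := (Complex.conj_eq_iff_re.mp e11).symm
  have hb : ((starRingEnd ℂ) (M 1 0)) * (M 1 0) = ((nb:ℝ):ℂ) := by
    rw [mul_comm, Complex.mul_conj]
  ext i j
  fin_cases i <;> fin_cases j <;>
    simp only [Matrix.mul_apply, Fin.sum_univ_two, Matrix.one_apply, Matrix.smul_apply,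
      Matrix.sub_apply, smul_eq_mul, Fin.mk_zero, Fin.mk_one] <;>
    simp only [er, es, eb] <;> norm_num <;>
    first
      | linear_combination hb
      | ring

lemma shifted_sq (M : Matrix (Fin 2) (Fin 2) ℂ)
    (hCH : M * M = (((M 0 0).re + (M 1 1).re : ℝ) : ℂ) • M
      - (((M 0 0).re * (M 1 1).re - Complex.normSq (M 1 0) : ℝ) : ℂ) • (1 : Matrix (Fin 2) (Fin 2) ℂ))
    (g : ℝ)
    (hg : g ^ 2 = ((M 0 0).re - (M 1 1).re) ^ 2 + 4 * Complex.normSq (M 1 0)) :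
    (M - ((((M 0 0).re + (M 1 1).re - g)/2 : ℝ) : ℂ) • 1)
      * (M - ((((M 0 0).re + (M 1 1).re - g)/2 : ℝ) : ℂ) • 1)
      = ((g:ℝ):ℂ) • (M - ((((M 0 0).re + (M 1 1).re - g)/2 : ℝ) : ℂ) • 1) := by
  set r : ℝ := (M 0 0).re
  set s : ℝ := (M 1 1).re
  set nb : ℝ := Complex.normSq (M 1 0)
  set mC : ℂ := ((( r + s - g)/2 : ℝ) : ℂ) with hmC
  have hgC : ((g:ℝ):ℂ)^2 = (((r - s)^2 + 4*nb : ℝ) : ℂ) := by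
    exact_mod_cast congrArg (Complex.ofReal) hg
  have expand : (M - mC • 1) * (M - mC • 1)
      = M * M - (2*mC) • M + (mC*mC) • 1 := by
    rw [sub_mul, mul_sub, mul_sub, Matrix.smul_mul, Matrix.mul_smul, Matrix.smul_mul]
    simp only [one_mul, mul_one, smul_smul]
    rw [two_mul, add_smul]
    abel
  rw [expand, hCH]
  match_scalars
  · rw [hmC]; push_cast; ring
  · rw [hmC]; push_cast; push_cast at hgC
    linear_combination (-1/4 : ℂ) * hgC

theorem continuous_diagonalization_2x2
    (a b : ℝ) (hab : a ≤ b) (A : ℝ → Matrix (Fin 2) (Fin 2) ℂ)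
    (hcont : ContinuousOn A (Icc a b))
    (hherm : ∀ t ∈ Icc a b, (A t).IsHermitian)
    (hdist : ∀ t ∈ Icc a b, HasDistinctEigenvalues (A t)) :
    ∃ U : ℝ → Matrix (Fin 2) (Fin 2) ℂ,
      ContinuousOn U (Icc a b) ∧
      ∀ t ∈ Icc a b, (U t)ᴴ * U t = 1 ∧ ((U t)ᴴ * A t * U t).IsDiag := by
  set r : ℝ → ℝ := fun t => (A t 0 0).re with hrd
  set s : ℝ → ℝ := fun t => (A t 1 1).re with hsd
  set nb : ℝ → ℝ := fun t => Complex.normSq (A t 1 0) with hnbd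
  set D : ℝ → ℝ := fun t => (r t - s t)^2 + 4 * nb t with hDd
  set g : ℝ → ℝ := fun t => Real.sqrt (D t) with hgd
  set m : ℝ → ℝ := fun t => (r t + s t - g t)/2 with hmd
  set P : ℝ → Matrix (Fin 2) (Fin 2) ℂ :=
    fun t => (((g t : ℝ) : ℂ))⁻¹ • (A t - (((m t : ℝ)) : ℂ) • 1) with hPd
  have hAh : ∀ t ∈ Icc a b, (A t)ᴴ = A t := fun t ht => hherm t ht
  have hDpos : ∀ t ∈ Icc a b, 0 < D t := fun t ht =>
    disc_pos (A t) (hAh t ht) (hdist t ht)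
  have hgpos : ∀ t ∈ Icc a b, 0 < g t := fun t ht =>
    Real.sqrt_pos.mpr (hDpos t ht)
  have hg2 : ∀ t ∈ Icc a b, g t ^ 2 = D t := fun t ht =>
    Real.sq_sqrt (le_of_lt (hDpos t ht))
  have hgne : ∀ t ∈ Icc a b, ((g t : ℝ) : ℂ) ≠ 0 := fun t ht =>
    Complex.ofReal_ne_zero.mpr (ne_of_gt (hgpos t ht))
  -- entries of A are continuous
  have hAij : ∀ i j, ContinuousOn (fun t => A t i j) (Icc a b) := fun i j =>
    (continuous_id.matrix_elem i j).comp_continuousOn hcont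
  -- projection property
  have hproj : ∀ t ∈ Icc a b, P t * P t = P t := by
    intro t ht
    have hCH := cayley_hamilton_2x2 (A t) (hAh t ht)
    have hX := shifted_sq (A t) hCH (g t) (hg2 t ht)
    show (((g t : ℝ) : ℂ))⁻¹ • (A t - (((m t : ℝ)) : ℂ) • 1)
        * ((((g t : ℝ) : ℂ))⁻¹ • (A t - (((m t : ℝ)) : ℂ) • 1))
        = (((g t : ℝ) : ℂ))⁻¹ • (A t - (((m t : ℝ)) : ℂ) • 1)
    rw [Matrix.smul_mul, Matrix.mul_smul, smul_smul, hX, smul_smul]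
    congr 1
    have := hgne t ht
    field_simp
  -- trace of P is 1
  have htr : ∀ t ∈ Icc a b, P t 0 0 + P t 1 1 = 1 := by
    intro t ht
    obtain ⟨er, es, _⟩ := herm_entries (A t) (hAh t ht)
    have h00 : P t 0 0 = (((g t : ℝ) : ℂ))⁻¹ * (A t 0 0 - ((m t : ℝ) : ℂ)) := by
      simp [hPd, Matrix.smul_apply, Matrix.sub_apply, Matrix.one_apply]
    have h11 : P t 1 1 = (((g t : ℝ) : ℂ))⁻¹ * (A t 1 1 - ((m t : ℝ) : ℂ)) := by
      simp [hPd, Matrix.smul_apply, Matrix.sub_apply, Matrix.one_apply]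
    rw [h00, h11, er, es]
    have hgne' := hgne t ht
    have hm : ((m t : ℝ) : ℂ) = (((r t + s t - g t)/2 : ℝ) : ℂ) := by rw [hmd]
    rw [hm]
    push_cast
    field_simp
    ring
  have hPne : ∀ t ∈ Icc a b, P t ≠ 0 := by
    intro t ht hP0
    have := htr t ht
    rw [hP0] at this
    simp at this
  -- entries of P are continuous
  have hrc : ContinuousOn r (Icc a b) :=
    Complex.continuous_re.comp_continuousOn (hAij 0 0)
  have hsc : ContinuousOn s (Icc a b) :=
    Complex.continuous_re.comp_continuousOn (hAij 1 1)
  have hnbc : ContinuousOn nb (Icc a b) :=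
    Complex.continuous_normSq.comp_continuousOn (hAij 1 0)
  have hDc : ContinuousOn D (Icc a b) := by
    apply ContinuousOn.add
    · exact (hrc.sub hsc).pow 2
    · exact continuousOn_const.mul hnbc
  have hgc : ContinuousOn g (Icc a b) :=
    Real.continuous_sqrt.comp_continuousOn hDc
  have hmc : ContinuousOn m (Icc a b) :=
    ((hrc.add hsc).sub hgc).div_const 2
  have hgCinv : ContinuousOn (fun t => (((g t : ℝ) : ℂ))⁻¹) (Icc a b) :=
    (Complex.continuous_ofReal.comp_continuousOn hgc).inv₀ (hgne)
  have hmCc : ContinuousOn (fun t => ((m t : ℝ) : ℂ)) (Icc a b) :=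
    Complex.continuous_ofReal.comp_continuousOn hmc
  have hPij : ∀ i j, ContinuousOn (fun t => P t i j) (Icc a b) := by
    intro i j
    have heq : (fun t => P t i j)
        = fun t => (((g t : ℝ) : ℂ))⁻¹ * (A t i j - ((m t : ℝ) : ℂ) * (1 : Matrix (Fin 2) (Fin 2) ℂ) i j) := by
      funext t
      simp [hPd, Matrix.smul_apply, Matrix.sub_apply]
    rw [heq]
    exact hgCinv.mul ((hAij i j).sub (hmCc.mul continuousOn_const))
  -- choose a continuous section of eigenvectors
  obtain ⟨v, hvc, hvprop⟩ := exists_section a b hab P hPij hproj hPne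
  -- normalize
  set N : ℝ → ℝ := fun t => Complex.normSq (v t 0) + Complex.normSq (v t 1) with hNd
  set nrm : ℝ → ℝ := fun t => Real.sqrt (N t) with hnrmd
  have hNpos : ∀ t ∈ Icc a b, 0 < N t := by
    intro t ht
    have hv0 := (hvprop t ht).1
    have h0 := Complex.normSq_nonneg (v t 0)
    have h1 := Complex.normSq_nonneg (v t 1)
    obtain ⟨i, hi⟩ := Function.ne_iff.mp hv0
    rw [Pi.zero_apply] at hi
    have hpos := Complex.normSq_pos.mpr hi
    fin_cases i <;> simp only [Fin.zero_eta, Fin.mk_one] at hpos <;>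
      (show 0 < Complex.normSq (v t 0) + Complex.normSq (v t 1); linarith)
  have hnrmpos : ∀ t ∈ Icc a b, 0 < nrm t := fun t ht => Real.sqrt_pos.mpr (hNpos t ht)
  have hnrm2 : ∀ t ∈ Icc a b, nrm t ^ 2 = N t := fun t ht => Real.sq_sqrt (le_of_lt (hNpos t ht))
  set v' : ℝ → (Fin 2 → ℂ) := fun t => (((nrm t : ℝ) : ℂ))⁻¹ • v t with hv'd
  -- eigen equation
  have heig : ∀ t ∈ Icc a b, A t *ᵥ v' t = (((m t + g t : ℝ)) : ℂ) • v' t := by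
    intro t ht
    have hfix := (hvprop t ht).2
    have hAdec : A t = ((m t : ℝ) : ℂ) • 1 + ((g t : ℝ) : ℂ) • P t := by
      rw [hPd]
      simp only [smul_smul]
      rw [mul_inv_cancel₀ (hgne t ht), one_smul]
      abel
    have h1 : A t *ᵥ v t = (((m t + g t : ℝ)) : ℂ) • v t := by
      conv_lhs => rw [hAdec]
      rw [Matrix.add_mulVec, Matrix.smul_mulVec, Matrix.smul_mulVec,
        Matrix.one_mulVec, hfix, ← add_smul]
      congr 1
      push_cast
      ring
    rw [hv'd]
    simp only [Matrix.mulVec_smul, h1, smul_smul]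
    rw [mul_comm]
  -- unit norm
  have hunit : ∀ t ∈ Icc a b,
      (starRingEnd ℂ) (v' t 0) * (v' t 0) + (starRingEnd ℂ) (v' t 1) * (v' t 1) = 1 := by
    intro t ht
    have hc0 : (starRingEnd ℂ) (v' t 0) * (v' t 0) = ((Complex.normSq (v' t 0) : ℝ) : ℂ) := by
      rw [mul_comm, Complex.mul_conj]
    have hc1 : (starRingEnd ℂ) (v' t 1) * (v' t 1) = ((Complex.normSq (v' t 1) : ℝ) : ℂ) := by
      rw [mul_comm, Complex.mul_conj]
    rw [hc0, hc1]
    have hval : ∀ i, v' t i = (((nrm t : ℝ) : ℂ))⁻¹ * v t i := by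
      intro i; rw [hv'd]; simp
    have hns : ∀ i, Complex.normSq (v' t i) = (nrm t)⁻¹^2 * Complex.normSq (v t i) := by
      intro i
      rw [hval i, Complex.normSq_mul, ← Complex.ofReal_inv, Complex.normSq_ofReal]
      ring
    rw [hns 0, hns 1]
    have hN : (nrm t)⁻¹^2 * Complex.normSq (v t 0) + (nrm t)⁻¹^2 * Complex.normSq (v t 1) = 1 := by
      have h2 := hnrm2 t ht
      have hpos := hNpos t ht
      have : (nrm t)⁻¹^2 * N t = 1 := by
        rw [inv_pow, h2, inv_mul_cancel₀ (ne_of_gt hpos)]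
      rw [hNd] at this
      calc (nrm t)⁻¹^2 * Complex.normSq (v t 0) + (nrm t)⁻¹^2 * Complex.normSq (v t 1)
          = (nrm t)⁻¹^2 * (Complex.normSq (v t 0) + Complex.normSq (v t 1)) := by ring
        _ = 1 := this
    exact_mod_cast congrArg (Complex.ofReal) hN
  -- the unitary
  set U : ℝ → Matrix (Fin 2) (Fin 2) ℂ := fun t =>
    !![v' t 0, -(starRingEnd ℂ) (v' t 1); v' t 1, (starRingEnd ℂ) (v' t 0)] with hUd
  refine ⟨U, ?_, ?_⟩
  · -- continuity of U
    have hvic : ∀ i, ContinuousOn (fun t => v t i) (Icc a b) := fun i =>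
      (continuous_apply i).comp_continuousOn hvc
    have hNc : ContinuousOn N (Icc a b) :=
      (Complex.continuous_normSq.comp_continuousOn (hvic 0)).add
        (Complex.continuous_normSq.comp_continuousOn (hvic 1))
    have hnrmc : ContinuousOn nrm (Icc a b) :=
      Real.continuous_sqrt.comp_continuousOn hNc
    have hnrmCne : ∀ t ∈ Icc a b, ((nrm t : ℝ) : ℂ) ≠ 0 := fun t ht =>
      Complex.ofReal_ne_zero.mpr (ne_of_gt (hnrmpos t ht))
    have hinvc : ContinuousOn (fun t => (((nrm t : ℝ) : ℂ))⁻¹) (Icc a b) :=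
      (Complex.continuous_ofReal.comp_continuousOn hnrmc).inv₀ hnrmCne
    have hv'ic : ∀ i, ContinuousOn (fun t => v' t i) (Icc a b) := by
      intro i
      have : (fun t => v' t i) = fun t => (((nrm t : ℝ) : ℂ))⁻¹ * v t i := by
        funext t; rw [hv'd]; simp
      rw [this]
      exact hinvc.mul (hvic i)
    rw [continuousOn_iff_continuous_restrict]
    apply continuous_matrix
    intro i j
    fin_cases i <;> fin_cases j <;>
      simp only [hUd, restrict, Matrix.cons_val', Matrix.cons_val_zero, Matrix.cons_val_one,
        Matrix.head_cons, Matrix.head_fin_const, Matrix.empty_val', Matrix.cons_val_fin_one]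
    · exact continuousOn_iff_continuous_restrict.mp (hv'ic 0)
    · exact continuousOn_iff_continuous_restrict.mp
        (((Complex.continuous_conj.comp_continuousOn (hv'ic 1))).neg)
    · exact continuousOn_iff_continuous_restrict.mp (hv'ic 1)
    · exact continuousOn_iff_continuous_restrict.mp
        (Complex.continuous_conj.comp_continuousOn (hv'ic 0))
  · -- pointwise unitarity and diagonalization
    intro t ht
    have heq := heig t ht
    have h0 : A t 0 0 * v' t 0 + A t 0 1 * v' t 1 = (((m t + g t : ℝ)) : ℂ) * v' t 0 := by
      have := congrFun heq 0
      simpa [Matrix.mulVec, dotProduct, Fin.sum_univ_two] using this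
    have h1 : A t 1 0 * v' t 0 + A t 1 1 * v' t 1 = (((m t + g t : ℝ)) : ℂ) * v' t 1 := by
      have := congrFun heq 1
      simpa [Matrix.mulVec, dotProduct, Fin.sum_univ_two] using this
    exact unitary_of_eigen (A t) (hAh t ht) (v' t 0) (v' t 1) (m t + g t) h0 h1 (hunit t ht)
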